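/- Let A = {a_1,...,a_k} with gcd 1, a_1 = min(A), p ≥ 0, and m_i^{(p)} as in the p-Apéry set. Then n_p(A) = (1/a_1)·Σ_{i=0}^{a_1−1} m_i^{(p)} − (a_1−1)/2. -/

import Mathlib

noncomputable def numRep (k : ℕ) (a : Fin k → ℕ) (n : ℕ) : ℕ :=
  Set.ncard {x : Fin k → ℕ | ∑ i, a i * x i = n}

def Sp (k p : ℕ) (a : Fin k → ℕ) : Set ℕ := {n : ℕ | p < numRep k a n}

lemma repFinite (k : ℕ) (a : Fin k → ℕ) (ha : ∀ i, 0 < a i) (n : ℕ) :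
    {x : Fin k → ℕ | ∑ i, a i * x i = n}.Finite := by
  apply Set.Finite.subset (Set.Finite.pi (fun i : Fin k => Set.finite_Iic n))
  intro x hx
  simp only [Set.mem_setOf_eq] at hx
  simp only [Set.mem_pi, Set.mem_univ, Set.mem_Iic, forall_true_left]
  intro i
  have h1 : a i * x i ≤ n := hx ▸ Finset.single_le_sum
    (f := fun i => a i * x i) (fun _ _ => Nat.zero_le _) (Finset.mem_univ i)
  calc x i ≤ a i * x i := Nat.le_mul_of_pos_left _ (ha i)
    _ ≤ n := h1

lemma Sp_add (k p : ℕ) (a : Fin (k+1) → ℕ) (ha : ∀ i, 0 < a i) {n : ℕ}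
    (hn : n ∈ Sp (k+1) p a) : n + a 0 ∈ Sp (k+1) p a := by
  have h : numRep (k+1) a n ≤ numRep (k+1) a (n + a 0) := by
    refine Set.ncard_le_ncard_of_injOn (fun x => Function.update x 0 (x 0 + 1))
      ?_ ?_ (repFinite (k+1) a ha (n + a 0))
    · intro x hx
      simp only [Set.mem_setOf_eq] at hx ⊢
      rw [Fin.sum_univ_succ] at hx ⊢
      simp only [Function.update_self, Function.update_of_ne (Fin.succ_ne_zero _)]
      rw [← hx]; ring
    · intro x hx y hy hxy
      funext i
      rcases eq_or_ne i 0 with rfl | hne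
      · have := congrFun hxy 0
        simpa using this
      · simpa [Function.update_of_ne hne] using congrFun hxy i
  exact lt_of_lt_of_le hn h

lemma Sp_add_mul (k p : ℕ) (a : Fin (k+1) → ℕ) (ha : ∀ i, 0 < a i) {n : ℕ}
    (hn : n ∈ Sp (k+1) p a) (t : ℕ) : n + a 0 * t ∈ Sp (k+1) p a := by
  induction t with
  | zero => simpa using hn
  | succ t ih =>
    have := Sp_add k p a ha ih
    have heq : n + a 0 * t + a 0 = n + a 0 * (t + 1) := by ring
    rwa [heq] at this

theorem stmt_15 (k p : ℕ) (a : Fin (k + 1) → ℕ) (m : ℕ → ℕ)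
    (ha : ∀ i, 0 < a i) (hgcd : Finset.univ.gcd a = 1)
    (hmin : ∀ i, a 0 ≤ a i)
    (hm : ∀ i < a 0, IsLeast {n ∈ Sp (k + 1) p a | n % a 0 = i} (m i)) :
    2 * ∑ i ∈ Finset.range (a 0), m i =
      2 * a 0 * Set.ncard {n : ℕ | n ∉ Sp (k + 1) p a} + a 0 * (a 0 - 1) := by
  have ha0 : 0 < a 0 := ha 0
  set c : ℕ → ℕ := fun i => (m i - i) / a 0 with hc
  -- m i = i + a 0 * c i
  have hmc : ∀ i < a 0, m i = i + a 0 * c i := by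
    intro i hi
    have hmod : m i % a 0 = i := ((hm i hi).1).2
    have h1 : a 0 * (m i / a 0) + i = m i := by
      conv_rhs => rw [← Nat.div_add_mod (m i) (a 0)]
      omega
    have h2 : m i - i = a 0 * (m i / a 0) := by omega
    have : c i = m i / a 0 := by
      simp only [hc, h2, Nat.mul_div_cancel_left _ ha0]
    rw [this]
    omega
  -- characterization of non-membership
  have hchar : ∀ n : ℕ, n ∉ Sp (k+1) p a ↔ n < m (n % a 0) := by
    intro n
    have hi : n % a 0 < a 0 := Nat.mod_lt _ ha0
    constructor
    · intro hn
      by_contra hge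
      push_neg at hge
      have hmod : m (n % a 0) % a 0 = n % a 0 := ((hm _ hi).1).2
      have hSp : m (n % a 0) ∈ Sp (k+1) p a := ((hm _ hi).1).1
      have hdvd : a 0 ∣ n - m (n % a 0) := by
        have : m (n % a 0) ≡ n [MOD a 0] := by
          unfold Nat.ModEq; rw [hmod]
        exact (Nat.modEq_iff_dvd' hge).mp this
      obtain ⟨t, ht⟩ := hdvd
      have : n = m (n % a 0) + a 0 * t := by omega
      exact hn (this ▸ Sp_add_mul k p a ha hSp t)
    · intro hlt hn
      exact absurd ((hm _ hi).2 ⟨hn, rfl⟩) (by omega)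
  -- the complement as a Finset
  set F : Finset ℕ := (Finset.range (a 0)).biUnion
    (fun i => (Finset.range (c i)).image (fun j => i + a 0 * j)) with hF
  have hset : {n : ℕ | n ∉ Sp (k+1) p a} = ↑F := by
    ext n
    simp only [Set.mem_setOf_eq, Finset.coe_biUnion, Set.mem_iUnion, Finset.mem_coe,
      Finset.mem_image, Finset.mem_range, hF, Finset.mem_biUnion]
    constructor
    · intro hn
      have hi : n % a 0 < a 0 := Nat.mod_lt _ ha0
      refine ⟨n % a 0, hi, n / a 0, ?_, ?_⟩
      · have hlt : n < m (n % a 0) := (hchar n).mp hn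
        have := hmc _ hi
        have hn' : n % a 0 + a 0 * (n / a 0) = n := Nat.mod_add_div n (a 0)
        nlinarith [Nat.mod_add_div n (a 0)]
      · exact Nat.mod_add_div n (a 0)
    · rintro ⟨i, hi, j, hj, rfl⟩
      have hmod : (i + a 0 * j) % a 0 = i := by
        rw [Nat.add_mul_mod_self_left, Nat.mod_eq_of_lt hi]
      rw [hchar, hmod, hmc i hi]
      have : a 0 * j < a 0 * c i := (Nat.mul_lt_mul_left ha0).mpr hj
      omega
  have hcard : Set.ncard {n : ℕ | n ∉ Sp (k+1) p a} = ∑ i ∈ Finset.range (a 0), c i := by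
    rw [hset, Set.ncard_coe_finset, hF]
    rw [Finset.card_biUnion]
    · refine Finset.sum_congr rfl (fun i hi => ?_)
      rw [Finset.card_image_of_injective _ (fun x y h => by
        have : a 0 * x = a 0 * y := by omega
        exact Nat.eq_of_mul_eq_mul_left ha0 this)]
      exact Finset.card_range _
    · intro i hi i' hi' hne
      simp only [Finset.mem_coe, Finset.mem_range] at hi hi'
      rw [Function.onFun, Finset.disjoint_left]
      rintro x hx hx'
      simp only [Finset.mem_image, Finset.mem_range] at hx hx'
      obtain ⟨j, _, rfl⟩ := hx
      obtain ⟨j', _, he⟩ := hx'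
      have h1 : (i + a 0 * j) % a 0 = i := by
        rw [Nat.add_mul_mod_self_left, Nat.mod_eq_of_lt hi]
      have h2 : (i' + a 0 * j') % a 0 = i' := by
        rw [Nat.add_mul_mod_self_left, Nat.mod_eq_of_lt hi']
      rw [he] at h2
      exact hne (by omega)
  rw [hcard]
  have hsum : ∑ i ∈ Finset.range (a 0), m i =
      (∑ i ∈ Finset.range (a 0), i) + a 0 * ∑ i ∈ Finset.range (a 0), c i := by
    rw [Finset.mul_sum, ← Finset.sum_add_distrib]
    exact Finset.sum_congr rfl (fun i hi => hmc i (Finset.mem_range.mp hi))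
  have hgauss : (∑ i ∈ Finset.range (a 0), i) * 2 = a 0 * (a 0 - 1) :=
    Finset.sum_range_id_mul_two (a 0)
  rw [hsum]
  ring_nf
  omega
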